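/- arXiv:1304.0719 — 3 statements merged into one kernel-verified Lean document; each statement's English description precedes it below -/
import Mathlib

section
/- In any Dallajascar (φ, H, r) on S, the relations ∫ and ⊐ are asymmetric and mutually exclusive: for all x, y : S, (a) if x ∫ y then not y ∫ x; (b) if x ⊐ y then not y ⊐ x; and (c) if x ∫ y then neither x ⊐ y nor y ⊐ x. -/
/-- A *Dallajascar* on a finite nonempty type `S`: a parent function `phi : S → Option S`,
an ordered-children function `H : S → List S`, and a root `r : S`, such that
(i) `phi r = none`; (ii) `phi x ≠ none` for `x ≠ r`; (iii) the transitive closure of the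
parent relation is irreflexive; (iv) `H x` is a duplicate-free list whose members are
exactly the `y` with `phi y = some x`. -/
structure Dallajascar (S : Type*) [Fintype S] [Nonempty S] where
  phi : S → Option S
  H : S → List S
  r : S
  phi_root : phi r = none
  phi_ne_none : ∀ x : S, x ≠ r → phi x ≠ none
  acyclic : ∀ x : S, ¬ Relation.TransGen (fun y z => phi y = some z) x x
  H_nodup : ∀ x : S, (H x).Nodup
  mem_H : ∀ x y : S, y ∈ H x ↔ phi y = some x

namespace Dallajascar

variable {S : Type*} [Fintype S] [Nonempty S]

/-- The parent relation: `P D y x` iff `x` is the parent of `y`. -/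
def P (D : Dallajascar S) (y x : S) : Prop := D.phi y = some x

/-- `Nest D x y` : « x emboîte y », i.e. `x` is a strict ancestor of `y`. -/
def Nest (D : Dallajascar S) (x y : S) : Prop := Relation.TransGen D.P y x

/-- `Prec D x y` : « x précède y » : there are ancestors-or-selves `x'` of `x` and `y'`
of `y` with a common parent `a`, `x'` occurring strictly before `y'` in `H a`. -/
def Prec (D : Dallajascar S) (x y : S) : Prop :=
  ∃ a x' y' : S, Relation.ReflTransGen D.P x x' ∧ Relation.ReflTransGen D.P y y' ∧
    D.phi x' = some a ∧ D.phi y' = some a ∧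
    ∃ i j : ℕ, i < j ∧ (D.H a)[i]? = some x' ∧ (D.H a)[j]? = some y'

lemma P_det (D : Dallajascar S) {u v w : S} (h1 : D.P u v) (h2 : D.P u w) : v = w := by
  have := h1.symm.trans h2
  exact Option.some.inj this

lemma acyclic' (D : Dallajascar S) (x : S) : ¬ Relation.TransGen D.P x x :=
  D.acyclic x

lemma comparable (D : Dallajascar S) : ∀ {z u v : S},
    Relation.ReflTransGen D.P z u → Relation.ReflTransGen D.P z v →
    Relation.ReflTransGen D.P u v ∨ Relation.ReflTransGen D.P v u := by
  intro z u v h1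
  induction h1 using Relation.ReflTransGen.head_induction_on with
  | refl => exact fun h2 => Or.inl h2
  | head hac hcu ih =>
    intro h2
    rcases Relation.ReflTransGen.cases_head h2 with rfl | ⟨c', hac', hcv⟩
    · exact Or.inr (Relation.ReflTransGen.head hac hcu)
    · exact ih (D.P_det hac hac' ▸ hcv)

lemma eq_of_same_parent (D : Dallajascar S) {z u v a : S}
    (hu : Relation.ReflTransGen D.P z u) (hv : Relation.ReflTransGen D.P z v)
    (hua : D.phi u = some a) (hva : D.phi v = some a) : u = v := by
  have key : ∀ {p q : S}, Relation.TransGen D.P p q → D.phi p = some a →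
      D.phi q = some a → False := by
    intro p q hpq hpa hqa
    rw [Relation.TransGen.head'_iff] at hpq
    obtain ⟨c, hpc, hcq⟩ := hpq
    have hca : c = a := D.P_det hpc hpa
    rw [hca] at hcq
    exact D.acyclic' a (Relation.TransGen.tail' hcq hqa)
  rcases D.comparable hu hv with h | h <;>
    rcases Relation.reflTransGen_iff_eq_or_transGen.mp h with rfl | h'
  · rfl
  · exact absurd (key h' hua hva) not_false
  · rfl
  · exact absurd (key h' hva hua) not_false

lemma ne_of_idx (D : Dallajascar S) {a x' y' : S} {i j : ℕ} (hij : i < j)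
    (hi : (D.H a)[i]? = some x') (hj : (D.H a)[j]? = some y') : x' ≠ y' := by
  rintro rfl
  have hlen : i < (D.H a).length := by
    by_contra h
    rw [List.getElem?_eq_none (le_of_not_gt h)] at hi
    exact Option.some_ne_none _ hi.symm
  have := (List.getElem?_inj hlen (D.H_nodup a)).mp (hi.trans hj.symm)
  omega

/-- `∫` and `⊐` are asymmetric and mutually exclusive. -/
theorem asymm_and_exclusive (D : Dallajascar S) :
    ∀ x y : S,
      (D.Nest x y → ¬ D.Nest y x) ∧
      (D.Prec x y → ¬ D.Prec y x) ∧
      (D.Nest x y → ¬ D.Prec x y ∧ ¬ D.Prec y x) := by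
  intro x y
  refine ⟨?_, ?_, ?_⟩
  · intro h1 h2
    exact D.acyclic' x (h2.trans h1)
  · rintro ⟨a, x', y', hxx', hyy', hxa, hya, i, j, hij, hi, hj⟩
      ⟨b, y'', x'', hyy'', hxx'', hyb, hxb, k, l, hkl, hk, hl⟩
    have hne1 : x' ≠ y' := D.ne_of_idx hij hi hj
    have hne2 : y'' ≠ x'' := D.ne_of_idx hkl hk hl
    rcases D.comparable hxx' hxx'' with h | h <;>
      rcases Relation.reflTransGen_iff_eq_or_transGen.mp h with heq | htg
    · -- x'' = x'
      subst heq
      have hab : b = a := Option.some.inj (hxb.symm.trans hxa)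
      subst hab
      have : y' = y'' := D.eq_of_same_parent hyy' hyy'' hya hyb
      subst this
      have hilen : i < (D.H b).length := by
        by_contra h'
        rw [List.getElem?_eq_none (le_of_not_gt h')] at hi
        exact Option.some_ne_none _ hi.symm
      have hjlen : j < (D.H b).length := by
        by_contra h'
        rw [List.getElem?_eq_none (le_of_not_gt h')] at hj
        exact Option.some_ne_none _ hj.symm
      have e1 : i = l := (List.getElem?_inj hilen (D.H_nodup b)).mp (hi.trans hl.symm)
      have e2 : j = k := (List.getElem?_inj hjlen (D.H_nodup b)).mp (hj.trans hk.symm)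
      omega
    · -- TransGen x' x''
      rw [Relation.TransGen.head'_iff] at htg
      obtain ⟨c, hxc, hcx''⟩ := htg
      have hca : c = a := D.P_det hxc hxa
      subst hca
      -- x'' is a strict ancestor of y'
      have hyx'' : Relation.ReflTransGen D.P y x'' :=
        hyy'.trans (Relation.ReflTransGen.head hya hcx'')
      have : y'' = x'' := D.eq_of_same_parent hyy'' hyx'' hyb hxb
      exact hne2 this
    · -- x' = x''
      subst heq
      have hab : b = a := Option.some.inj (hxb.symm.trans hxa)
      subst hab
      have : y' = y'' := D.eq_of_same_parent hyy' hyy'' hya hyb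
      subst this
      have hilen : i < (D.H b).length := by
        by_contra h'
        rw [List.getElem?_eq_none (le_of_not_gt h')] at hi
        exact Option.some_ne_none _ hi.symm
      have hjlen : j < (D.H b).length := by
        by_contra h'
        rw [List.getElem?_eq_none (le_of_not_gt h')] at hj
        exact Option.some_ne_none _ hj.symm
      have e1 : i = l := (List.getElem?_inj hilen (D.H_nodup b)).mp (hi.trans hl.symm)
      have e2 : j = k := (List.getElem?_inj hjlen (D.H_nodup b)).mp (hj.trans hk.symm)
      omega
    · -- TransGen x'' x'
      rw [Relation.TransGen.head'_iff] at htg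
      obtain ⟨c, hxc, hcx'⟩ := htg
      have hcb : c = b := D.P_det hxc hxb
      subst hcb
      have hyx' : Relation.ReflTransGen D.P y x' :=
        hyy''.trans (Relation.ReflTransGen.head hyb hcx')
      have : x' = y' := D.eq_of_same_parent hyx' hyy' hxa hya
      exact hne1 this
  · intro hN
    constructor
    · rintro ⟨a, x', y', hxx', hyy', hxa, hya, i, j, hij, hi, hj⟩
      have hne : x' ≠ y' := D.ne_of_idx hij hi hj
      have hyx' : Relation.ReflTransGen D.P y x' :=
        (Relation.TransGen.to_reflTransGen hN).trans hxx'
      exact hne (D.eq_of_same_parent hyx' hyy' hxa hya)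
    · rintro ⟨a, u, v, hyu, hxv, hua, hva, i, j, hij, hi, hj⟩
      have hne : u ≠ v := D.ne_of_idx hij hi hj
      have hyv : Relation.ReflTransGen D.P y v :=
        (Relation.TransGen.to_reflTransGen hN).trans hxv
      exact hne (D.eq_of_same_parent hyu hyv hua hva)

end Dallajascar
end

section
/- For every Dallajascar (φ, H, r) on a finite nonempty type S, the number of opening characters of M(φ,H) equals the number of elements of S: (M(φ,H)).count true = Fintype.card S, and consequently (M(φ,H)).length = 2 * Fintype.card S. -/
namespace Dallajascar

variable {S : Type*} [Fintype S] [Nonempty S]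

/-- The parent relation is well-founded. -/
theorem wfP (D : Dallajascar S) : WellFounded D.P := by
  haveI : IsTrans S (Relation.TransGen D.P) := ⟨fun _ _ _ h₁ h₂ => h₁.trans h₂⟩
  haveI : IsIrrefl S (Relation.TransGen D.P) := ⟨D.acyclic⟩
  exact Subrelation.wf (r := Relation.TransGen D.P)
    (fun {x y} h => Relation.TransGen.single h)
    (Finite.wellFounded_of_trans_of_irrefl _)

/-- `W D x` : the word over `{true (open), false (close)}` associated with the subtree
rooted at `x`, defined by well-founded recursion:
`W x = true :: (((H x).map W).flatten ++ [false])`. -/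
noncomputable def W (D : Dallajascar S) : S → List Bool :=
  D.wfP.fix fun x ih =>
    true :: ((((D.H x).attach.map fun (y : {y : S // y ∈ D.H x}) =>
      ih y.1 ((D.mem_H x y.1).1 y.2)).flatten) ++ [false])

/-- `M(φ,H)` : the Jassological word of the Dallajascar. -/
noncomputable def MJword (D : Dallajascar S) : List Bool := D.W D.r

theorem W_eq (D : Dallajascar S) (x : S) :
    D.W x = true :: ((((D.H x).map D.W).flatten) ++ [false]) := by
  rw [W, WellFounded.fix_eq]
  simp only [List.map_attach_eq_pmap, List.pmap_eq_map]

/-- The flipped parent relation is also well-founded. -/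
theorem wfP' (D : Dallajascar S) : WellFounded (Function.swap D.P) := by
  haveI : IsTrans S (Relation.TransGen (Function.swap D.P)) :=
    ⟨fun _ _ _ h₁ h₂ => h₁.trans h₂⟩
  haveI : IsIrrefl S (Relation.TransGen (Function.swap D.P)) := by
    constructor
    intro x hx
    exact D.acyclic x ((Relation.transGen_swap).1 hx)
  exact Subrelation.wf (r := Relation.TransGen (Function.swap D.P))
    (fun {x y} h => Relation.TransGen.single h)
    (Finite.wellFounded_of_trans_of_irrefl _)

/-- Every element is a (reflexive-transitive) descendant of the root. -/
theorem reaches_root (D : Dallajascar S) (y : S) : Relation.ReflTransGen D.P y D.r := by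
  induction y using D.wfP'.induction with
  | _ y ih =>
    by_cases hy : y = D.r
    · subst hy; exact Relation.ReflTransGen.refl
    · obtain ⟨z, hz⟩ := Option.ne_none_iff_exists'.1 (D.phi_ne_none y hy)
      exact Relation.ReflTransGen.head hz (ih z hz)

/-- Ancestors of a common element are comparable. -/
theorem comparable_s16 (D : Dallajascar S) {y a b : S}
    (ha : Relation.ReflTransGen D.P y a) (hb : Relation.ReflTransGen D.P y b) :
    Relation.ReflTransGen D.P a b ∨ Relation.ReflTransGen D.P b a := by
  induction ha using Relation.ReflTransGen.head_induction_on with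
  | refl => exact Or.inl hb
  | head hyz hza ih =>
    rename_i y' z
    rcases Relation.ReflTransGen.cases_head hb with h | ⟨c, hyc, hcb⟩
    · subst h; right; exact Relation.ReflTransGen.head hyz hza
    · have hyc' : D.phi y' = some c := hyc
      have hyz' : D.phi y' = some z := hyz
      have : c = z := Option.some_injective _ (hyc'.symm.trans hyz')
      subst this
      exact ih hcb

theorem not_descend_of_child (D : Dallajascar S) {x c : S} (hc : D.P c x)
    (h : Relation.ReflTransGen D.P x c) : False :=
  D.acyclic x (Relation.TransGen.tail' h hc)

open Classical in
/-- The subtree of `x`. -/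
noncomputable def T (D : Dallajascar S) (x : S) : Finset S :=
  Finset.univ.filter (fun y => Relation.ReflTransGen D.P y x)

theorem mem_T (D : Dallajascar S) {x y : S} :
    y ∈ D.T x ↔ Relation.ReflTransGen D.P y x := by
  simp [T]

theorem count_W (D : Dallajascar S) (x : S) (b : Bool) :
    (D.W x).count b = (D.T x).card := by
  classical
  induction x using D.wfP.induction with
  | _ x ih =>
    have hT : D.T x = insert x ((D.H x).toFinset.biUnion (fun c => D.T c)) := by
      ext y
      simp only [mem_T, Finset.mem_insert, Finset.mem_biUnion, List.mem_toFinset, D.mem_H]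
      constructor
      · intro h
        rcases Relation.ReflTransGen.cases_tail h with h | ⟨c, hyc, hcx⟩
        · exact Or.inl h.symm
        · exact Or.inr ⟨c, hcx, hyc⟩
      · rintro (rfl | ⟨c, hcx, hyc⟩)
        · exact Relation.ReflTransGen.refl
        · exact hyc.tail hcx
    have hx_not : x ∉ (D.H x).toFinset.biUnion (fun c => D.T c) := by
      simp only [Finset.mem_biUnion, List.mem_toFinset, D.mem_H, mem_T, not_exists]
      intro c h
      exact D.not_descend_of_child h.1 h.2
    have hdisj : ∀ c₁ ∈ (D.H x).toFinset, ∀ c₂ ∈ (D.H x).toFinset, c₁ ≠ c₂ →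
        Disjoint (D.T c₁) (D.T c₂) := by
      intro c₁ h₁ c₂ h₂ hne
      rw [List.mem_toFinset, D.mem_H] at h₁ h₂
      rw [Finset.disjoint_left]
      intro y hy₁ hy₂
      rw [mem_T] at hy₁ hy₂
      rcases D.comparable_s16 hy₁ hy₂ with h | h
      · rcases Relation.ReflTransGen.cases_head h with h | ⟨m, h₁m, hm⟩
        · exact hne h
        · have h₁m' : D.phi c₁ = some m := h₁m
          have : m = x := Option.some_injective _ (h₁m'.symm.trans h₁)
          subst this
          exact D.not_descend_of_child h₂ hm
      · rcases Relation.ReflTransGen.cases_head h with h | ⟨m, h₂m, hm⟩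
        · exact hne h.symm
        · have h₂m' : D.phi c₂ = some m := h₂m
          have : m = x := Option.some_injective _ (h₂m'.symm.trans h₂)
          subst this
          exact D.not_descend_of_child h₁ hm
    have hcard : (D.T x).card = 1 + ∑ c ∈ (D.H x).toFinset, (D.T c).card := by
      rw [hT, Finset.card_insert_of_notMem hx_not, Finset.card_biUnion hdisj]
      omega
    have hcount : (D.W x).count b = 1 + ((D.H x).map (fun c => (D.W c).count b)).sum := by
      rw [W_eq, List.count_cons, List.count_append, List.count_flatten, List.map_map]
      cases b <;> simp [Function.comp_def, List.count_cons] <;> omega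
    rw [hcount, hcard, List.sum_toFinset _ (D.H_nodup x)]
    congr 1
    exact congrArg List.sum (List.map_congr_left fun c hc => ih c ((D.mem_H x c).1 hc))

end Dallajascar

/-- The number of opening characters of `M(φ,H)` is the cardinality of `S`, and its
length is twice that cardinality. -/
theorem mjword_count_card {S : Type*} [Fintype S] [Nonempty S] (D : Dallajascar S) :
    D.MJword.count true = Fintype.card S ∧ D.MJword.length = 2 * Fintype.card S := by
  classical
  have hT : D.T D.r = Finset.univ := by
    ext y
    simp [Dallajascar.mem_T, D.reaches_root y]
  have h1 : D.MJword.count true = Fintype.card S := by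
    rw [Dallajascar.MJword, D.count_W D.r true, hT, Finset.card_univ]
  have h2 : D.MJword.count false = Fintype.card S := by
    rw [Dallajascar.MJword, D.count_W D.r false, hT, Finset.card_univ]
  refine ⟨h1, ?_⟩
  have key : ∀ l : List Bool, l.length = l.count true + l.count false := by
    intro l
    induction l with
    | nil => simp
    | cons a t iht =>
      rw [List.length_cons, List.count_cons, List.count_cons, iht]
      cases a <;> simp <;> omega
  rw [key D.MJword, h1, h2]
  omega
end

section
/- (Section 3.3.5) Let M : List Bool be a Simple Jassological word with m occurrences of true, at indices α_1 < α_2 < ⋯ < α_m, and for each k let β_k be the least index β > α_k such that the factor of M from index α_k to index β (inclusive) contains equally many occurrences of true and false. Set a_k = (α_k, β_k) and S = {a_1, …, a_m}. Define φ : S → Option S by φ(a_1) = none and, for 2 ≤ k ≤ m, φ(a_k) = some a_q where q is the largest index with 1 ≤ q ≤ k−1 and β_k < β_q; define H(a) as the list of those a_k with φ(a_k) = some a, listed in order of increasing k. Then (φ, H, a_1) is a Dallajascar on S (conditions (i)–(iv) hold), and M(φ,H) = M. -/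
/-- A *Mot Jassologique Simple* : a nonempty word containing equally many opening
(`true`) and closing (`false`) characters, every nonempty proper prefix of which contains
strictly more opening than closing characters. -/
def SimpleJasso (M : List Bool) : Prop :=
  M ≠ [] ∧ M.count true = M.count false ∧
    ∀ t : List Bool, t <+: M → t ≠ [] → t ≠ M → t.count false < t.count true

/-- `Bal M i j` : the factor of `M` from index `i` to index `j` (inclusive) contains
equally many `true` and `false`. -/
def Bal (M : List Bool) (i j : ℕ) : Prop :=
  ((M.drop i).take (j + 1 - i)).count true = ((M.drop i).take (j + 1 - i)).count false


section AuxDepth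

/-- The depth function: excess of `true` over `false` in the length-`i` prefix. -/
def dep (M : List Bool) (i : ℕ) : ℤ :=
  ((M.take i).count true : ℤ) - ((M.take i).count false : ℤ)

lemma dep_zero (M : List Bool) : dep M 0 = 0 := by simp [dep]

lemma dep_succ (M : List Bool) {i : ℕ} {b : Bool} (h : M[i]? = some b) :
    dep M (i+1) = dep M i + (if b then 1 else -1) := by
  have hi : i < M.length := by
    by_contra hc
    simp [List.getElem?_eq_none (le_of_not_gt hc)] at h
  unfold dep
  rw [List.take_succ, h]
  cases b <;> simp [List.count_append] <;> ring

lemma dep_stable (M : List Bool) {i : ℕ} (h : M.length ≤ i) : dep M i = dep M M.length := by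
  rw [dep, dep, List.take_of_length_le h, List.take_length]

lemma dep_step_ge (M : List Bool) (i : ℕ) :
    dep M i - 1 ≤ dep M (i+1) ∧ dep M (i+1) ≤ dep M i + 1 := by
  rcases lt_or_ge i M.length with hi | hi
  · have h : M[i]? = some M[i] := List.getElem?_eq_getElem hi
    have := dep_succ M h
    cases hb : M[i] <;> simp [hb] at this <;> omega
  · have h1 := dep_stable M hi
    have h2 := dep_stable M (show M.length ≤ i+1 by omega)
    omega

lemma dep_ivt (M : List Bool) {c : ℤ} : ∀ {b a : ℕ}, a ≤ b → c ≤ dep M a → dep M b ≤ c →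
    ∃ i, a ≤ i ∧ i ≤ b ∧ dep M i = c := by
  intro b
  induction b with
  | zero =>
    intro a h1 h2 h3
    have : a = 0 := by omega
    subst this
    exact ⟨0, le_rfl, le_rfl, le_antisymm h3 h2⟩
  | succ b ih =>
    intro a h1 h2 h3
    rcases eq_or_lt_of_le h1 with rfl | h
    · exact ⟨_, le_rfl, le_rfl, le_antisymm h3 h2⟩
    · rcases le_or_gt (dep M b) c with hb | hb
      · obtain ⟨i, hi⟩ := ih (by omega) h2 hb
        exact ⟨i, hi.1, by omega, hi.2.2⟩
      · have := dep_step_ge M b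
        exact ⟨b+1, by omega, le_rfl, by omega⟩

lemma count_take_add (M : List Bool) (i j : ℕ) (b : Bool) :
    (M.take (i + j)).count b = (M.take i).count b + (((M.drop i).take j).count b) := by
  rw [List.take_add, List.count_append]

lemma bal_iff (M : List Bool) {i j : ℕ} (hij : i ≤ j) :
    Bal M i j ↔ dep M (j+1) = dep M i := by
  have h1 := count_take_add M i (j+1-i) true
  have h2 := count_take_add M i (j+1-i) false
  rw [show i + (j+1-i) = j+1 by omega] at h1 h2
  unfold Bal dep
  omega

lemma dep_length (M : List Bool) (hM : SimpleJasso M) : dep M M.length = 0 := by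
  unfold dep; rw [List.take_length, hM.2.1]; ring

lemma dep_pos (M : List Bool) (hM : SimpleJasso M) {i : ℕ} (h1 : 0 < i) (h2 : i < M.length) :
    0 < dep M i := by
  have := hM.2.2 (M.take i) (List.take_prefix i M)
    (by intro h; have := congrArg List.length h; rw [List.length_take] at this;
        simp only [List.length_nil] at this; omega)
    (by intro h; have := congrArg List.length h; rw [List.length_take] at this; omega)
  unfold dep; omega

lemma filter_sorted_split {γ : Type*} [LinearOrder γ] :
    ∀ {l : List γ}, l.Pairwise (· < ·) → ∀ {p : γ → Bool} {c : γ}, c ∈ l → p c = true →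
    (∀ k, p k = true → c ≤ k) →
    l.filter p = c :: l.filter (fun k => decide (c < k) && p k) := by
  intro l hl
  induction l with
  | nil => intro p c hc; simp at hc
  | cons a t ih =>
    intro p c hc hpc hmin
    rcases List.mem_cons.1 hc with rfl | hct
    · simp only [List.filter_cons, hpc, if_pos, decide_true, lt_irrefl, decide_false,
        Bool.false_and, Bool.false_eq_true, if_false, if_true]
      congr 1
      apply List.filter_congr
      intro k hk
      have : c < k := (List.pairwise_cons.1 hl).1 k hk
      simp [this]
    · have hac : a < c := (List.pairwise_cons.1 hl).1 c hct
      have hpa' : p a = false :=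
        Bool.eq_false_iff.2 (fun h => absurd (hmin a h) (not_le.2 hac))
      rw [List.filter_cons, List.filter_cons, if_neg (by simp [hpa']), if_neg (by simp [hpa'])]
      exact ih (List.pairwise_cons.1 hl).2 hct hpc hmin

lemma W_eq {S : Type*} [Fintype S] [Nonempty S] (D : Dallajascar S) (x : S) :
    D.W x = true :: (((D.H x).map D.W).flatten ++ [false]) := by
  show D.wfP.fix _ x = _
  rw [WellFounded.fix_eq]
  congr 2
  show (List.map (fun (y : {y // y ∈ D.H x}) => D.W y.1) (D.H x).attach).flatten = _
  simp [List.attach_map_val]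

end AuxDepth

/-- Section 3.3.5: from a Simple Jassological word `M` with `m` opening characters at
indices `α 0 < α 1 < ⋯`, with `β k` the least index `> α k` closing a balanced factor
starting at `α k`, one gets a Dallajascar (rooted at the first opening character, with
`φ` sending each opening character to the innermost enclosing one and `H` listing the
antecedents in increasing order) whose Jassological word is `M`. -/
theorem dallajascar_of_simpleJasso (M : List Bool) (hM : SimpleJasso M)
    (m : ℕ) (hm : 0 < m) (hcount : M.count true = m)
    (α β : Fin m → ℕ)
    (hmono : StrictMono α)
    (hαtrue : ∀ k : Fin m, M[α k]? = some true)
    (hαall : ∀ i : ℕ, M[i]? = some true → ∃ k : Fin m, α k = i)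
    (hβ : ∀ k : Fin m, α k < β k ∧ Bal M (α k) (β k) ∧
      ∀ j : ℕ, α k < j → j < β k → ¬ Bal M (α k) j) :
    haveI : Nonempty (Fin m) := ⟨⟨0, hm⟩⟩
    ∃ D : Dallajascar (Fin m),
      D.r = ⟨0, hm⟩ ∧
      D.phi ⟨0, hm⟩ = none ∧
      (∀ k : Fin m, 0 < (k : ℕ) → ∃ q : Fin m, D.phi k = some q ∧ q < k ∧ β k < β q ∧
        ∀ q' : Fin m, q' < k → β k < β q' → q' ≤ q) ∧
      (∀ a : Fin m, D.H a = (List.finRange m).filter fun k => decide (D.phi k = some a)) ∧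
      D.MJword = M := by
  classical
  haveI : Nonempty (Fin m) := ⟨⟨0, hm⟩⟩
  have hα_lt : ∀ k : Fin m, α k < M.length := fun k =>
    (List.getElem?_eq_some_iff.1 (hαtrue k)).1
  have hα_dep : ∀ k : Fin m, dep M (α k + 1) = dep M (α k) + 1 := fun k => by
    have := dep_succ M (hαtrue k); simpa using this
  have hdeplen : dep M M.length = 0 := dep_length M hM
  have hdeppos : ∀ i, 0 < i → i < M.length → 0 < dep M i := fun i h1 h2 => dep_pos M hM h1 h2
  have hlen0 : 0 < M.length := lt_of_le_of_lt (Nat.zero_le _) (hα_lt ⟨0, hm⟩)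
  have hlen2 : 2 ≤ M.length := by
    by_contra hc
    have hn1 : M.length = 1 := by omega
    have hb : M[0]? = some M[0] := List.getElem?_eq_getElem (by omega)
    have hd := dep_succ M hb
    rw [dep_zero] at hd
    have h1 : dep M 1 = 0 := hn1 ▸ hdeplen
    cases M[0] <;> simp at hd <;> omega
  -- β specification in terms of dep
  have hβspec : ∀ k : Fin m, β k + 1 ≤ M.length ∧ dep M (β k + 1) = dep M (α k) ∧
      ∀ i, α k < i → i ≤ β k → dep M (α k) < dep M i := by
    intro k
    obtain ⟨hαβ, hbal, hmin⟩ := hβ k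
    have hminD : ∀ i, α k + 1 < i → i ≤ β k → dep M i ≠ dep M (α k) := by
      intro i h1 h2 hEq
      exact hmin (i-1) (by omega) (by omega)
        ((bal_iff M (by omega)).2 (by rw [show i-1+1 = i by omega]; exact hEq))
    have hle : β k + 1 ≤ M.length := by
      by_contra hc
      push_neg at hc
      have hex : ∃ i, α k + 1 ≤ i ∧ i ≤ M.length ∧ dep M i = dep M (α k) := by
        rcases Nat.eq_zero_or_pos (α k) with h0 | h0
        · exact ⟨M.length, by omega, le_rfl, by rw [hdeplen, h0, dep_zero]⟩
        · have hp := hdeppos (α k) h0 (hα_lt k)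
          apply dep_ivt M (show α k + 1 ≤ M.length by have := hα_lt k; omega)
          · rw [hα_dep k]; omega
          · rw [hdeplen]; omega
      obtain ⟨i, hi1, hi2, hi3⟩ := hex
      have hi4 : α k + 1 < i := by
        rcases eq_or_lt_of_le hi1 with heq | h
        · exfalso; rw [← heq] at hi3; rw [hα_dep k] at hi3; omega
        · exact h
      exact hminD i hi4 (by omega) hi3
    have hdepβ : dep M (β k + 1) = dep M (α k) := (bal_iff M (le_of_lt hαβ)).1 hbal
    refine ⟨hle, hdepβ, ?_⟩
    have hgt : ∀ i, α k + 1 ≤ i → i ≤ β k → dep M (α k) < dep M i := by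
      intro i hi
      induction i, hi using Nat.le_induction with
      | base => intro _; rw [hα_dep k]; omega
      | succ i hi ihh =>
        intro h2
        have hd := ihh (by omega)
        have hstep := dep_step_ge M i
        have hne : dep M (i+1) ≠ dep M (α k) := hminD (i+1) (by omega) h2
        omega
    exact fun i h1 h2 => hgt i (by omega) h2
  -- nesting
  have hnest : ∀ q k : Fin m, α q < α k → α k ≤ β q → β k < β q := by
    intro q k h1 h2
    obtain ⟨hq1, hq2, hq3⟩ := hβspec q
    obtain ⟨hk1, hk2, hk3⟩ := hβspec k
    have hαk : dep M (α q) < dep M (α k) := hq3 (α k) h1 h2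
    by_contra hcon
    push_neg at hcon
    rcases eq_or_lt_of_le hcon with heq | hlt
    · rw [heq] at hq2; omega
    · have := hk3 (β q + 1) (by omega) (by omega)
      omega
  -- the first opening character
  have hα0 : α ⟨0, hm⟩ = 0 := by
    have h00 : M[0]? = some true := by
      have h0 : M[0]? = some M[0] := List.getElem?_eq_getElem hlen0
      have hd := dep_succ M h0
      have hp1 := hdeppos 1 one_pos (by omega)
      rw [dep_zero] at hd
      cases hb : M[0]
      · rw [hb] at hd; simp at hd; omega
      · rw [hb] at h0; exact h0
    obtain ⟨k, hk⟩ := hαall 0 h00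
    have : α ⟨0, hm⟩ ≤ α k := hmono.monotone (by simp [Fin.le_def])
    omega
  have hβ0 : β ⟨0, hm⟩ + 1 = M.length := by
    obtain ⟨h1, h2, h3⟩ := hβspec ⟨0, hm⟩
    rw [hα0, dep_zero] at h2
    by_contra hc
    have hlt : β ⟨0, hm⟩ + 1 < M.length := by omega
    have hpos := hdeppos (β ⟨0, hm⟩ + 1) (by omega) hlt
    omega
  -- construction of phi
  set sset : Fin m → Finset (Fin m) :=
    fun k => Finset.univ.filter fun q => q < k ∧ β k < β q with hsset
  have hsne : ∀ k : Fin m, 0 < (k : ℕ) → (sset k).Nonempty := by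
    intro k hk
    refine ⟨⟨0, hm⟩, ?_⟩
    rw [hsset]
    refine Finset.mem_filter.2 ⟨Finset.mem_univ _, ?_, ?_⟩
    · exact Fin.mk_lt_of_lt_val hk
    · apply hnest
      · rw [hα0]
        have h0k : (⟨0, hm⟩ : Fin m) < k := Fin.mk_lt_of_lt_val hk
        have := hmono h0k
        omega
      · have := hα_lt k; omega
  set phi : Fin m → Option (Fin m) :=
    fun k => if h : 0 < (k : ℕ) then some ((sset k).max' (hsne k h)) else none with hphi
  have phi_eq_some : ∀ k : Fin m, 0 < (k : ℕ) → ∃ q : Fin m, phi k = some q ∧ q < k ∧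
      β k < β q ∧ ∀ q' : Fin m, q' < k → β k < β q' → q' ≤ q := by
    intro k hk
    have hmemiff : ∀ r : Fin m, r ∈ sset k ↔ (r < k ∧ β k < β r) := by
      intro r; rw [hsset]; simp [Finset.mem_filter]
    have hmem := (hmemiff _).1 ((sset k).max'_mem (hsne k hk))
    refine ⟨(sset k).max' (hsne k hk), ?_, hmem.1, hmem.2, ?_⟩
    · simp only [hphi]; rw [dif_pos hk]
    · intro q' h1 h2
      apply Finset.le_max'
      exact (hmemiff _).2 ⟨h1, h2⟩
  have phi_none : phi ⟨0, hm⟩ = none := by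
    simp only [hphi]; rw [dif_neg]; simp
  have phi_inv : ∀ k q : Fin m, phi k = some q → q < k ∧ β k < β q ∧
      ∀ q' : Fin m, q' < k → β k < β q' → q' ≤ q := by
    intro k q h
    rcases Nat.eq_zero_or_pos (k : ℕ) with h0 | h0
    · exfalso
      rw [show phi k = none by simp only [hphi]; rw [dif_neg]; omega] at h
      cases h
    · obtain ⟨q0, hq0, h1, h2, h3⟩ := phi_eq_some k h0
      rw [h] at hq0
      obtain rfl := Option.some.inj hq0
      exact ⟨h1, h2, h3⟩
  -- construction of H
  set H : Fin m → List (Fin m) :=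
    fun a => (List.finRange m).filter fun k => decide (phi k = some a) with hH
  -- Dallajascar axioms
  have hφnn : ∀ x : Fin m, x ≠ ⟨0, hm⟩ → phi x ≠ none := by
    intro x hx
    have h0 : 0 < (x : ℕ) := by
      rcases Nat.eq_zero_or_pos (x : ℕ) with h | h
      · exact absurd (Fin.ext h) hx
      · exact h
    obtain ⟨q, hq, -, -, -⟩ := phi_eq_some x h0
    rw [hq]; simp
  have hacyc : ∀ x : Fin m, ¬ Relation.TransGen (fun y z => phi y = some z) x x := by
    have hlt : ∀ a b : Fin m, Relation.TransGen (fun y z => phi y = some z) a b → b < a := by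
      intro a b h
      induction h with
      | single h => exact (phi_inv _ _ h).1
      | tail _ h2 ih => exact lt_trans (phi_inv _ _ h2).1 ih
    intro x hx
    exact lt_irrefl x (hlt x x hx)
  have hHnodup : ∀ x : Fin m, (H x).Nodup := by
    intro x; rw [hH]; exact (List.nodup_finRange m).filter _
  have hmemH : ∀ x y : Fin m, y ∈ H x ↔ phi y = some x := by
    intro x y; rw [hH]; simp
  set D : Dallajascar (Fin m) :=
    ⟨phi, H, ⟨0, hm⟩, phi_none, hφnn, hacyc, hHnodup, hmemH⟩ with hD
  -- the tiling lemma
  have tile_base : ∀ (x : Fin m) (s : ℕ), β x ≤ s →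
      ((List.finRange m).filter fun k => decide (s ≤ α k) && decide (phi k = some x)) = [] := by
    intro x s hs
    apply List.filter_eq_nil_iff.2
    intro k _
    simp only [Bool.and_eq_true, decide_eq_true_eq, not_and]
    intro hsa hphik
    exfalso
    obtain ⟨h1, h2, -⟩ := phi_inv k x hphik
    have h3 : α x < α k := hmono h1
    have h4 := (hβ k).1
    omega
  have tile : ∀ (t : ℕ) (x : Fin m) (s : ℕ), α x < s → s ≤ β x →
      dep M s = dep M (α x) + 1 → β x - s ≤ t →
      (((List.finRange m).filter fun k => decide (s ≤ α k) && decide (phi k = some x)).map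
          (fun k => (M.drop (α k)).take (β k + 1 - α k))).flatten
        = (M.drop s).take (β x - s) := by
    intro t
    induction t with
    | zero =>
      intro x s h1 h2 h3 h4
      have hs : s = β x := by omega
      rw [tile_base x s (by omega), hs]
      simp
    | succ t ih =>
      intro x s h1 h2 h3 h4
      rcases eq_or_lt_of_le h2 with heq | hlt
      · rw [tile_base x s (by omega), heq]
        simp
      · -- M[s] = true
        have hxlen := (hβspec x).1
        have hslen : s < M.length := by omega
        have hsb : M[s]? = some M[s] := List.getElem?_eq_getElem hslen
        have hstrue : M[s]? = some true := by
          cases hb : M[s]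
          · exfalso
            have hd := dep_succ M hsb
            rw [hb] at hd; simp at hd
            have := (hβspec x).2.2 (s+1) (by omega) (by omega)
            omega
          · rw [hb] at hsb; exact hsb
        obtain ⟨c, hc⟩ := hαall s hstrue
        have hxc : x < c := hmono.lt_iff_lt.1 (by omega)
        have hβc : β c < β x := hnest x c (by omega) (by omega)
        have hacbc := (hβ c).1
        have hc0 : 0 < (c : ℕ) := by
          have hxc' : (x : ℕ) < (c : ℕ) := hxc
          omega
        obtain ⟨q, hq, hq1, hq2, hq3⟩ := phi_eq_some c hc0
        have hqx : q = x := by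
          have hxq : x ≤ q := hq3 x hxc hβc
          rcases eq_or_lt_of_le hxq with h | h
          · exact h.symm
          · exfalso
            have h1q : α x < α q := hmono h
            have h2q : α q < α c := hmono hq1
            have hd1 : dep M (α x) < dep M (α q) := (hβspec x).2.2 (α q) h1q (by omega)
            have hd2 : dep M (α q) < dep M (α c) := (hβspec q).2.2 (α c) h2q (by omega)
            rw [hc] at hd2
            omega
        have hφc : phi c = some x := hqx ▸ hq
        have hsplit := filter_sorted_split (List.pairwise_lt_finRange m)
          (p := fun k => decide (s ≤ α k) && decide (phi k = some x))
          (List.mem_finRange c) (by simp [hc, hφc])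
          (by
            intro k hk
            simp only [Bool.and_eq_true, decide_eq_true_eq] at hk
            exact hmono.le_iff_le.1 (by omega))
        have hcong : (List.finRange m).filter
            (fun k => decide (c < k) && (decide (s ≤ α k) && decide (phi k = some x)))
            = (List.finRange m).filter
              (fun k => decide (β c + 1 ≤ α k) && decide (phi k = some x)) := by
          apply List.filter_congr
          intro k _
          rw [Bool.eq_iff_iff]
          simp only [Bool.and_eq_true, decide_eq_true_eq]
          constructor
          · rintro ⟨h1, h2, h3⟩
            refine ⟨?_, h3⟩
            by_contra hcon
            push_neg at hcon
            have hck : α c < α k := hmono h1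
            have hnk : β k < β c := hnest c k hck (by omega)
            obtain ⟨-, -, hmax⟩ := phi_inv k x h3
            have := hmax c h1 hnk
            exact absurd hxc (not_lt.2 this)
          · rintro ⟨h1, h2⟩
            have hck : α c < α k := by omega
            exact ⟨hmono.lt_iff_lt.1 hck, by omega, h2⟩
        have hβc1 : dep M (β c + 1) = dep M (α x) + 1 := by
          have := (hβspec c).2.1
          rw [hc] at this
          omega
        have hrec := ih x (β c + 1) (by omega) (by omega) hβc1 (by omega)
        rw [hsplit, List.map_cons, List.flatten_cons, hcong, hrec, hc]
        have hsplit2 : β x - s = (β c + 1 - s) + (β x - (β c + 1)) := by omega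
        rw [hsplit2, List.take_add, List.drop_drop,
          show s + (β c + 1 - s) = β c + 1 by omega]
  -- the main computation : W k is the factor from α k to β k
  have main : ∀ (t : ℕ) (k : Fin m), β k - α k ≤ t →
      D.W k = (M.drop (α k)).take (β k + 1 - α k) := by
    intro t
    induction t with
    | zero =>
      intro k hk
      exfalso
      have := (hβ k).1
      omega
    | succ t ih =>
      intro k hk
      rw [W_eq]
      have hmapWF : (D.H k).map D.W
          = (D.H k).map (fun c => (M.drop (α c)).take (β c + 1 - α c)) := by
        apply List.map_congr_left
        intro c hcmem
        have hφc : phi c = some k := (D.mem_H k c).1 hcmem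
        obtain ⟨h1, h2, -⟩ := phi_inv c k hφc
        have h3 : α k < α c := hmono h1
        apply ih
        have := (hβ c).1
        have := (hβ k).1
        omega
      rw [hmapWF]
      have hfilt : D.H k = (List.finRange m).filter
          fun j => decide (α k + 1 ≤ α j) && decide (phi j = some k) := by
        rw [show D.H k = H k from rfl, hH]
        apply List.filter_congr
        intro j _
        by_cases hφ : phi j = some k
        · have := hmono (phi_inv j k hφ).1
          simp [hφ, show α k + 1 ≤ α j by omega]
        · simp [hφ]
      rw [hfilt,
        tile (β k) k (α k + 1) (by omega) (by have := (hβ k).1; omega) (hα_dep k) (by omega)]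
      obtain ⟨hβlen, hβdep, hβgt⟩ := hβspec k
      have hαβ := (hβ k).1
      have h1 : M.drop (α k) = true :: M.drop (α k + 1) := by
        rw [List.drop_eq_getElem_cons (hα_lt k)]
        congr 1
        exact (List.getElem?_eq_some_iff.1 (hαtrue k)).2
      rw [h1, show β k + 1 - α k = (β k - α k) + 1 by omega, List.take_succ_cons]
      congr 1
      rw [show β k - α k = (β k - (α k + 1)) + 1 by omega, List.take_succ]
      congr 1
      rw [List.getElem?_drop, show α k + 1 + (β k - (α k + 1)) = β k by omega]
      have hβlt : β k < M.length := by omega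
      have hb : M[β k]? = some M[β k] := List.getElem?_eq_getElem hβlt
      cases hbb : M[β k]
      · rw [hbb] at hb; rw [hb]; rfl
      · exfalso
        have hd := dep_succ M hb
        rw [hbb] at hd; simp at hd
        have := hβgt (β k) (by omega) le_rfl
        omega
  refine ⟨D, rfl, phi_none, phi_eq_some, fun a => rfl, ?_⟩
  show D.W ⟨0, hm⟩ = M
  have hmain := main (β ⟨0, hm⟩) ⟨0, hm⟩ (by omega)
  rw [hα0] at hmain
  rw [hmain, List.drop_zero, Nat.sub_zero, hβ0, List.take_length]
end
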